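/- The point P = (5736, 252720) has infinite order on the elliptic curve Y² = X³ − 28802736·X + 40355763840 over ℚ. -/

import Mathlib

open WeierstrassCurve

def E : Affine ℚ := { a₁ := 0, a₂ := 0, a₃ := 0, a₄ := -28802736, a₆ := 40355763840 }

namespace Stmt16

open WeierstrassCurve.Affine


abbrev Sq : Subgroup ℚˣ := (powMonoidHom 2 : ℚˣ →* ℚˣ).range

abbrev G := ℚˣ ⧸ Sq

noncomputable def mkq (q : ℚ) (h : q ≠ 0) : G := QuotientGroup.mk (Units.mk0 q h)

lemma mkq_congr {a b : ℚ} (ha : a ≠ 0) (hb : b ≠ 0) (h : a = b) : mkq a ha = mkq b hb := by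
  subst h; rfl

lemma mkq_mul {a b : ℚ} (ha : a ≠ 0) (hb : b ≠ 0) :
    mkq a ha * mkq b hb = mkq (a * b) (mul_ne_zero ha hb) := by
  unfold mkq
  rw [← QuotientGroup.mk_mul]
  congr 1
  ext
  simp

lemma mkq_eq_one_iff {a : ℚ} (ha : a ≠ 0) : mkq a ha = 1 ↔ IsSquare a := by
  unfold mkq
  rw [QuotientGroup.eq_one_iff]
  constructor
  · rintro ⟨v, hv⟩
    refine ⟨(v : ℚ), ?_⟩
    have := congrArg Units.val hv
    simp only [powMonoidHom_apply, Units.val_pow_eq_pow_val, Units.val_mk0] at this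
    rw [← this, sq]
  · rintro ⟨r, hr⟩
    have hr0 : r ≠ 0 := by rintro rfl; simp at hr; exact ha hr
    refine ⟨Units.mk0 r hr0, ?_⟩
    ext
    simp [sq, hr]

lemma mkq_sq {a : ℚ} (ha : a ≠ 0) : mkq a ha * mkq a ha = 1 := by
  rw [mkq_mul, mkq_eq_one_iff]; exact ⟨a, rfl⟩

lemma mkq_eq_of_isSquare_mul {a b : ℚ} (ha : a ≠ 0) (hb : b ≠ 0) (h : IsSquare (a * b)) :
    mkq a ha = mkq b hb := by
  have h1 : mkq a ha * mkq b hb = 1 := by rw [mkq_mul, mkq_eq_one_iff]; exact h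
  calc mkq a ha = mkq a ha * (mkq b hb * mkq b hb) := by rw [mkq_sq, mul_one]
  _ = (mkq a ha * mkq b hb) * mkq b hb := (mul_assoc _ _ _).symm
  _ = mkq b hb := by rw [h1, one_mul]

lemma isSquare_mul_of_mkq_eq {a b : ℚ} (ha : a ≠ 0) (hb : b ≠ 0)
    (h : mkq a ha = mkq b hb) : IsSquare (a * b) := by
  rw [← mkq_eq_one_iff (mul_ne_zero ha hb), ← mkq_mul ha hb, h, mkq_sq]

/-- x-coordinate descent value relative to the 2-torsion root 1524. -/
def val (x : ℚ) : ℚ := if x = 1524 then -21835008 else x - 1524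

lemma val_ne_zero (x : ℚ) : val x ≠ 0 := by
  unfold val; split
  · norm_num
  · exact sub_ne_zero.mpr (by assumption)

noncomputable def phi : E.Point → G
  | .zero => 1
  | @Point.some _ _ _ x _ _ => mkq (val x) (val_ne_zero x)

lemma phi_zero : phi 0 = 1 := rfl

lemma phi_some {x y : ℚ} (h : E.Nonsingular x y) :
    phi (Point.some _ _ h) = mkq (val x) (val_ne_zero x) := rfl


lemma E_negY (x y : ℚ) : E.negY x y = -y := by
  simp [WeierstrassCurve.Affine.negY, E]

lemma E_equation {x y : ℚ} (h : E.Equation x y) :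
    y ^ 2 = x ^ 3 - 28802736 * x + 40355763840 := by
  have := (E.equation_iff x y).mp h
  simp only [E] at this
  linarith [this]

lemma E_addX (x₁ x₂ L : ℚ) : E.addX x₁ x₂ L = L ^ 2 - x₁ - x₂ := by
  simp [WeierstrassCurve.Affine.addX, E]

lemma E_slope_ne {x₁ x₂ y₁ y₂ : ℚ} (hx : x₁ ≠ x₂) :
    E.slope x₁ x₂ y₁ y₂ = (y₁ - y₂) / (x₁ - x₂) := slope_of_X_ne hx

lemma E_slope_tan {x y : ℚ} (hy : y ≠ E.negY x y) :
    E.slope x x y y = (3 * x ^ 2 - 28802736) / (2 * y) := by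
  rw [slope_of_Y_ne rfl hy, E_negY]
  simp [E]
  ring_nf

lemma val_of_ne {x : ℚ} (h : x ≠ 1524) : val x = x - 1524 := if_neg h
lemma val_of_eq : val 1524 = -21835008 := if_pos rfl

/-- Main algebraic identity: the product of the descent values of three collinear points
is a square. -/
lemma val_triple_square {x₁ x₂ y₁ y₂ : ℚ} (h₁ : E.Equation x₁ y₁) (h₂ : E.Equation x₂ y₂)
    (hxy : x₁ = x₂ → y₁ ≠ E.negY x₂ y₂) :
    IsSquare (val x₁ * val x₂ * val (E.addX x₁ x₂ (E.slope x₁ x₂ y₁ y₂))) := by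
  set L := E.slope x₁ x₂ y₁ y₂ with hLdef
  have heq₁ := E_equation h₁
  have heq₂ := E_equation h₂
  have hadd := E_addX x₁ x₂ L
  -- Case x₁ = 1524
  by_cases hx₁e : x₁ = 1524
  · subst hx₁e
    have hy₁0 : y₁ = 0 := by
      have : y₁ ^ 2 = 0 := by rw [heq₁]; norm_num
      exact pow_eq_zero_iff two_ne_zero |>.mp this
    have hx₂e : x₂ ≠ 1524 := by
      intro hx₂e
      subst hx₂e
      have hy₂0 : y₂ = 0 := by
        have : y₂ ^ 2 = 0 := by rw [heq₂]; norm_num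
        exact pow_eq_zero_iff two_ne_zero |>.mp this
      exact hxy rfl (by rw [E_negY, hy₂0, hy₁0]; norm_num)
    have hx12 : (1524 : ℚ) ≠ x₂ := fun h => hx₂e h.symm
    have hL : L * (x₂ - 1524) = y₂ := by
      rw [hLdef, E_slope_ne hx12, hy₁0, div_mul_eq_mul_div, div_eq_iff (sub_ne_zero.mpr hx12)]
      ring
    have key : (x₂ - 1524) * ((x₂ - 1524) * (L ^ 2 - 1524 - x₂ - 1524)) =
        (x₂ - 1524) * (-21835008) := by
      linear_combination (L * (x₂ - 1524) + y₂) * hL + heq₂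
    have hv : (x₂ - 1524) * (L ^ 2 - 1524 - x₂ - 1524) = -21835008 :=
      mul_left_cancel₀ (sub_ne_zero.mpr hx₂e) key
    have hx3ne : E.addX 1524 x₂ L ≠ 1524 := by
      rw [hadd]
      intro hE
      rw [show L ^ 2 - 1524 - x₂ - 1524 = 0 by linarith] at hv
      norm_num at hv
    rw [val_of_eq, val_of_ne hx₂e, val_of_ne hx3ne, hadd]
    exact ⟨-21835008, by linear_combination -21835008 * hv⟩
  · by_cases hx₂e : x₂ = 1524
    · -- Case x₂ = 1524, x₁ ≠ 1524
      subst hx₂e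
      have hy₂0 : y₂ = 0 := by
        have : y₂ ^ 2 = 0 := by rw [heq₂]; norm_num
        exact pow_eq_zero_iff two_ne_zero |>.mp this
      have hx12 : x₁ ≠ (1524 : ℚ) := hx₁e
      have hL : L * (x₁ - 1524) = y₁ := by
        rw [hLdef, E_slope_ne hx12, hy₂0, div_mul_eq_mul_div,
          div_eq_iff (sub_ne_zero.mpr hx12)]
        ring
      have key : (x₁ - 1524) * ((x₁ - 1524) * (L ^ 2 - x₁ - 1524 - 1524)) =
          (x₁ - 1524) * (-21835008) := by
        linear_combination (L * (x₁ - 1524) + y₁) * hL + heq₁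
      have hv : (x₁ - 1524) * (L ^ 2 - x₁ - 1524 - 1524) = -21835008 :=
        mul_left_cancel₀ (sub_ne_zero.mpr hx₁e) key
      have hx3ne : E.addX x₁ 1524 L ≠ 1524 := by
        rw [hadd]
        intro hE
        rw [show L ^ 2 - x₁ - 1524 - 1524 = 0 by linarith] at hv
        norm_num at hv
      rw [val_of_ne hx₁e, val_of_eq, val_of_ne hx3ne, hadd]
      exact ⟨-21835008, by linear_combination -21835008 * hv⟩
    · -- Case x₁ ≠ 1524, x₂ ≠ 1524
      have G1 : (x₁ - 1524) * (x₂ - 1524) * (L ^ 2 - x₁ - x₂ - 1524) =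
          (L * (1524 - x₁) + y₁) ^ 2 := by
        by_cases hx : x₁ = x₂
        · subst hx
          have hy : y₁ ≠ E.negY x₁ y₂ := hxy rfl
          have hyy : y₁ = y₂ := Y_eq_of_Y_ne h₁ h₂ rfl hy
          subst hyy
          have hy0 : y₁ ≠ 0 := by
            intro h0
            exact hy (by rw [E_negY, h0]; norm_num)
          have hdt : 2 * y₁ * L = 3 * x₁ ^ 2 - 28802736 := by
            rw [hLdef, E_slope_tan hy, mul_div_assoc', mul_comm,
              div_eq_iff (by intro h0; exact hy0 (by linarith : y₁ = 0))]
          linear_combination (-1 : ℚ) * heq₁ + (x₁ - 1524) * hdt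
        · have hL : L * (x₁ - x₂) = y₁ - y₂ := by
            rw [hLdef, E_slope_ne hx, div_mul_eq_mul_div, div_eq_iff (sub_ne_zero.mpr hx)]
          have heq₂' : (y₁ - L * (x₁ - x₂)) ^ 2 = x₂ ^ 3 - 28802736 * x₂ + 40355763840 := by
            rw [show y₁ - L * (x₁ - x₂) = y₂ by linear_combination -hL]
            exact heq₂
          have key : (x₁ - x₂) * ((x₁ - 1524) * (x₂ - 1524) * (L ^ 2 - x₁ - x₂ - 1524)) =
              (x₁ - x₂) * ((L * (1524 - x₁) + y₁) ^ 2) := by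
            linear_combination (x₂ - 1524) * heq₁ - (x₁ - 1524) * heq₂'
          exact mul_left_cancel₀ (sub_ne_zero.mpr hx) key
      by_cases hx3 : E.addX x₁ x₂ L = 1524
      · -- sum is the 2-torsion point with x = 1524
        have hx3' : L ^ 2 - x₁ - x₂ = 1524 := by rw [← hadd]; exact hx3
        have hr : L * (1524 - x₁) + y₁ = 0 := by
          have h0 : (L * (1524 - x₁) + y₁) ^ 2 = 0 := by
            rw [← G1, show L ^ 2 - x₁ - x₂ - 1524 = 0 by linarith]
            ring
          exact pow_eq_zero_iff two_ne_zero |>.mp h0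
        by_cases hx : x₁ = x₂
        · -- tangent case: impossible
          exfalso
          subst hx
          have hy : y₁ ≠ E.negY x₁ y₂ := hxy rfl
          have hyy : y₁ = y₂ := Y_eq_of_Y_ne h₁ h₂ rfl hy
          subst hyy
          have hy0 : y₁ ≠ 0 := by
            intro h0
            exact hy (by rw [E_negY, h0]; norm_num)
          have hdt : 2 * y₁ * L = 3 * x₁ ^ 2 - 28802736 := by
            rw [hLdef, E_slope_tan hy, mul_div_assoc', mul_comm,
              div_eq_iff (by intro h0; exact hy0 (by linarith : y₁ = 0))]
          have g1t : (2 * x₁ + 1524) * (x₁ - 1524) ^ 2 =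
              x₁ ^ 3 - 28802736 * x₁ + 40355763840 := by
            linear_combination heq₁ - (x₁ - 1524) ^ 2 * hx3' - (L * (x₁ - 1524) + y₁) * hr
          have key : (x₁ - 1524) * ((x₁ - 1524) ^ 2) = (x₁ - 1524) * (-21835008) := by
            linear_combination g1t
          have hsq : (x₁ - 1524) ^ 2 = -21835008 :=
            mul_left_cancel₀ (sub_ne_zero.mpr hx₁e) key
          nlinarith [sq_nonneg (x₁ - 1524)]
        · have g1 : (x₁ + x₂ + 1524) * (x₁ - 1524) ^ 2 =
              x₁ ^ 3 - 28802736 * x₁ + 40355763840 := by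
            linear_combination heq₁ - (x₁ - 1524) ^ 2 * hx3' - (L * (x₁ - 1524) + y₁) * hr
          have key : (x₁ - 1524) * ((x₁ - 1524) * (x₂ - 1524)) =
              (x₁ - 1524) * (-21835008) := by
            linear_combination g1
          have hv : (x₁ - 1524) * (x₂ - 1524) = -21835008 :=
            mul_left_cancel₀ (sub_ne_zero.mpr hx₁e) key
          rw [val_of_ne hx₁e, val_of_ne hx₂e, hx3, val_of_eq]
          exact ⟨-21835008, by linear_combination -21835008 * hv⟩
      · rw [val_of_ne hx₁e, val_of_ne hx₂e, val_of_ne hx3, hadd]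
        exact ⟨L * (1524 - x₁) + y₁, by linear_combination G1⟩

lemma phi_sq (P : E.Point) : phi P * phi P = 1 := by
  rcases P with _ | @⟨x, y, hns⟩
  · show (1 : G) * 1 = 1; exact one_mul 1
  · exact mkq_sq _

lemma phi_add (P Q : E.Point) : phi (P + Q) = phi P * phi Q := by
  rcases P with _ | @⟨x₁, y₁, h₁⟩
  · rw [← Point.zero_def, zero_add, phi_zero, one_mul]
  rcases Q with _ | @⟨x₂, y₂, h₂⟩
  · rw [← Point.zero_def, add_zero, phi_zero, mul_one]
  by_cases hyy : x₁ = x₂ ∧ y₁ = E.negY x₂ y₂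
  · rw [Point.add_of_Y_eq hyy.1 hyy.2, phi_zero, phi_some, phi_some, mkq_mul]
    rw [eq_comm, mkq_eq_one_iff]
    obtain ⟨hx, -⟩ := hyy
    rw [hx]
    exact ⟨val x₂, rfl⟩
  · have hxy : x₁ = x₂ → y₁ ≠ E.negY x₂ y₂ := fun hx hy => hyy ⟨hx, hy⟩
    rw [Point.add_some hyy, phi_some, phi_some, phi_some, mkq_mul]
    apply mkq_eq_of_isSquare_mul
    have := val_triple_square h₁.1 h₂.1 hxy
    obtain ⟨r, hr⟩ := this
    exact ⟨r, by rw [← hr]; ring⟩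

lemma phi_nsmul (j : ℕ) (P : E.Point) : phi (j • P) = phi P ^ j := by
  induction j with
  | zero => rw [zero_nsmul, pow_zero, phi_zero]
  | succ n ih => rw [succ_nsmul, phi_add, ih, pow_succ]

lemma not_sq_neg {q : ℚ} (h : q < 0) : ¬ IsSquare q := by
  rintro ⟨r, rfl⟩
  nlinarith [mul_self_nonneg r]

lemma not_sq_nat {N s : ℕ} (h1 : s * s < N) (h2 : N < (s + 1) * (s + 1)) :
    ¬ IsSquare ((N : ℕ) : ℚ) := by
  rw [Rat.isSquare_natCast_iff]
  rintro ⟨r, hr⟩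
  rcases le_or_gt r s with hle | hlt
  · nlinarith
  · nlinarith

lemma exists_some {T : E.Point} (hT : T ≠ 0) :
    ∃ (x y : ℚ) (hh : E.Nonsingular x y), T = Point.some _ _ hh := by
  rcases T with _ | @⟨x, y, hns⟩
  · exact absurd Point.zero_def.symm hT
  · exact ⟨x, y, hns, rfl⟩

end Stmt16

open Stmt16 WeierstrassCurve.Affine in
theorem stmt_16 (h : E.Nonsingular 5736 252720) :
    addOrderOf (Affine.Point.some _ _ h) = 0 := by
  by_contra h0
  set P : E.Point := Affine.Point.some _ _ h with hPdef
  set n := addOrderOf P with hndef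
  have hnP : n • P = 0 := addOrderOf_nsmul_eq_zero P
  obtain ⟨k, m, hm2, hnkm⟩ := Nat.exists_eq_pow_mul_and_not_dvd h0 2 (by norm_num)
  have hm0 : m ≠ 0 := fun hh => hm2 (hh ▸ dvd_zero 2)
  have hphiP : phi P = mkq 4212 (by norm_num) := by
    rw [hPdef, phi_some]
    exact mkq_congr _ _ (by norm_num [val])
  have hP2 : phi P ^ 2 = 1 := by rw [pow_two]; exact phi_sq P
  have hPevenpow : ∀ t : ℕ, phi P ^ (2 * t) = 1 := fun t => by
    rw [pow_mul, hP2, one_pow]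
  have hPoddpow : ∀ t : ℕ, phi P ^ (2 * t + 1) = phi P := fun t => by
    rw [pow_succ, hPevenpow, one_mul]
  -- helper for 2-torsion points
  have htwotor : ∀ (x y : ℚ) (hns : E.Nonsingular x y),
      Point.some _ _ hns + Point.some _ _ hns = 0 → y = 0 ∧ (x = -5964 ∨ x = 1524 ∨ x = 4440) := by
    intro x y hns hadd
    have hy : y = 0 := by
      by_cases hy' : y = E.negY x y
      · rw [E_negY] at hy'; linarith
      · rw [Point.add_self_of_Y_ne hy'] at hadd
        exact absurd hadd (Point.some_ne_zero _)
    refine ⟨hy, ?_⟩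
    have heq := E_equation hns.1
    rw [hy] at heq
    have hroots : (x + 5964) * (x - 1524) * (x - 4440) = 0 := by linear_combination -heq
    rcases mul_eq_zero.mp hroots with hr | hr
    · rcases mul_eq_zero.mp hr with hr' | hr'
      · exact Or.inl (by linarith)
      · exact Or.inr (Or.inl (by linarith))
    · exact Or.inr (Or.inr (by linarith))
  rcases k with _ | k'
  · -- n odd
    rw [pow_zero, one_mul] at hnkm
    obtain ⟨q, hq⟩ : ∃ q, m = 2 * q + 1 := ⟨m / 2, by omega⟩
    have hPP : ((q + 1) • P) + ((q + 1) • P) = P := by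
      rw [← add_nsmul, show q + 1 + (q + 1) = n + 1 by omega, add_nsmul, hnP, zero_add,
        one_nsmul]
    have h1 : phi P = 1 := by rw [← hPP, phi_add, phi_sq]
    rw [hphiP, mkq_eq_one_iff] at h1
    have : ¬ IsSquare ((4212 : ℚ)) := by
      have := not_sq_nat (N := 4212) (s := 64) (by norm_num) (by norm_num)
      simpa using this
    exact this h1
  · -- n = 2^(k'+1) * m
    have hj0 : 2 ^ k' * m ≠ 0 := by positivity
    have hjj : 2 ^ k' * m + 2 ^ k' * m = n := by rw [hnkm, pow_succ]; ring
    have hRR : (2 ^ k' * m) • P + (2 ^ k' * m) • P = 0 := by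
      rw [← add_nsmul, hjj, hnP]
    have hRne : (2 ^ k' * m) • P ≠ 0 := by
      intro hR
      have hdvd : n ∣ 2 ^ k' * m := addOrderOf_dvd_iff_nsmul_eq_zero.mpr hR
      have := Nat.le_of_dvd (Nat.pos_of_ne_zero hj0) hdvd
      omega
    obtain ⟨xR, yR, hnsR, hRdef⟩ := exists_some hRne
    rw [hRdef] at hRR
    obtain ⟨hyR, hxRcases⟩ := htwotor _ _ _ hRR
    have hphiR : mkq (val xR) (val_ne_zero xR) = phi P ^ (2 ^ k' * m) := by
      rw [← phi_some hnsR, ← hRdef, phi_nsmul]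
    rcases k' with _ | k''
    · -- k' = 0 : R = m • P with m odd, so phi R = phi P
      obtain ⟨q, hq⟩ : ∃ q, m = 2 * q + 1 := ⟨m / 2, by omega⟩
      rw [pow_zero, one_mul] at hphiR
      rw [hq, hPoddpow q, hphiP] at hphiR
      have hsq := isSquare_mul_of_mkq_eq _ _ hphiR
      rcases hxRcases with hx | hx | hx <;> subst hx
      · rw [show val (-5964 : ℚ) = -7488 by norm_num [val]] at hsq
        exact not_sq_neg (by norm_num) hsq
      · rw [val_of_eq] at hsq
        exact not_sq_neg (by norm_num) hsq
      · rw [show val (4440 : ℚ) = 2916 by norm_num [val]] at hsq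
        rw [show ((2916 : ℚ) * 4212) = ((12282192 : ℕ) : ℚ) by norm_num] at hsq
        exact not_sq_nat (s := 3504) (by norm_num) (by norm_num) hsq
    · -- k' = k'' + 1 : phi R = 1
      rw [show 2 ^ (k'' + 1) * m = 2 * (2 ^ k'' * m) by rw [pow_succ]; ring,
        hPevenpow] at hphiR
      have hsqR : IsSquare (val xR) := (mkq_eq_one_iff _).mp hphiR
      have hxR : xR = 4440 := by
        rcases hxRcases with hx | hx | hx <;> subst hx
        · rw [show val (-5964 : ℚ) = -7488 by norm_num [val]] at hsqR
          exact absurd hsqR (not_sq_neg (by norm_num))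
        · rw [val_of_eq] at hsqR
          exact absurd hsqR (not_sq_neg (by norm_num))
        · rfl
      -- now consider S with S + S = R
      have hSS : (2 ^ k'' * m) • P + (2 ^ k'' * m) • P = Point.some _ _ hnsR := by
        rw [← add_nsmul, show 2 ^ k'' * m + 2 ^ k'' * m = 2 ^ (k'' + 1) * m by
          rw [pow_succ]; ring, ← hRdef]
      have hSne : (2 ^ k'' * m) • P ≠ 0 := by
        intro hS
        rw [hS, add_zero] at hSS
        exact hRne (hRdef.trans hSS.symm) |>.elim
      obtain ⟨xS, yS, hnsS, hSdef⟩ := exists_some hSne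
      rw [hSdef] at hSS
      have hySne : yS ≠ E.negY xS yS := by
        intro hy
        rw [Point.add_self_of_Y_eq hy] at hSS
        exact Point.some_ne_zero _ hSS.symm
      rw [Point.add_self_of_Y_ne hySne] at hSS
      have hyS0 : yS ≠ 0 := by
        intro h0
        apply hySne
        rw [E_negY, h0, neg_zero]
      injection hSS with hxadd hyadd
      rw [hxR] at hxadd
      rw [hyR] at hyadd
      -- tangent line passes through (4440, 0)
      have h2' : E.slope xS xS yS yS * (4440 - xS) + yS = 0 := by
        have hh := hyadd
        rw [WeierstrassCurve.Affine.addY, WeierstrassCurve.Affine.negAddY, E_negY, hxadd] at hh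
        linarith
      have hdt : 2 * yS * E.slope xS xS yS yS = 3 * xS ^ 2 - 28802736 := by
        rw [E_slope_tan hySne, mul_div_assoc', mul_comm,
          div_eq_iff (by intro hc; exact hyS0 (by linarith))]
      have heqS := E_equation hnsS.1
      have R1 : (3 * xS ^ 2 - 28802736) * (4440 - xS) = -2 * yS ^ 2 := by
        linear_combination 2 * yS * h2' - (4440 - xS) * hdt
      have hcube : (xS - 9948) * (xS + 1068) * (xS - 4440) = 0 := by
        linear_combination -R1 + 2 * heqS
      have hxSne : xS ≠ 4440 := by
        intro hc
        apply hyS0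
        have : yS ^ 2 = 0 := by rw [heqS, hc]; norm_num
        exact pow_eq_zero_iff two_ne_zero |>.mp this
      have hxScases : xS = 9948 ∨ xS = -1068 := by
        rcases mul_eq_zero.mp hcube with hr | hr
        · rcases mul_eq_zero.mp hr with hr' | hr'
          · exact Or.inl (by linarith)
          · exact Or.inr (by linarith)
        · exact absurd (by linarith : xS = 4440) hxSne
      have hphiS : mkq (val xS) (val_ne_zero xS) = phi P ^ (2 ^ k'' * m) := by
        rw [← phi_some hnsS, ← hSdef, phi_nsmul]
      rcases k'' with _ | k'''
      · -- exponent odd: phi S = phi P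
        obtain ⟨q, hq⟩ : ∃ q, m = 2 * q + 1 := ⟨m / 2, by omega⟩
        rw [pow_zero, one_mul, hq, hPoddpow q, hphiP] at hphiS
        have hsq := isSquare_mul_of_mkq_eq _ _ hphiS
        rcases hxScases with hx | hx <;> subst hx
        · rw [show val (9948 : ℚ) = 8424 by norm_num [val]] at hsq
          rw [show ((8424 : ℚ) * 4212) = ((35481888 : ℕ) : ℚ) by norm_num] at hsq
          exact not_sq_nat (s := 5956) (by norm_num) (by norm_num) hsq
        · rw [show val (-1068 : ℚ) = -2592 by norm_num [val]] at hsq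
          exact not_sq_neg (by norm_num) hsq
      · -- exponent even: phi S = 1
        rw [show 2 ^ (k''' + 1) * m = 2 * (2 ^ k''' * m) by rw [pow_succ]; ring,
          hPevenpow] at hphiS
        have hsqS : IsSquare (val xS) := (mkq_eq_one_iff _).mp hphiS
        rcases hxScases with hx | hx <;> subst hx
        · rw [show val (9948 : ℚ) = 8424 by norm_num [val]] at hsqS
          rw [show ((8424 : ℚ)) = ((8424 : ℕ) : ℚ) by norm_num] at hsqS
          exact not_sq_nat (s := 91) (by norm_num) (by norm_num) hsqS
        · rw [show val (-1068 : ℚ) = -2592 by norm_num [val]] at hsqS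
          exact not_sq_neg (by norm_num) hsqS
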